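/- arXiv:2307.16069 — 9 statements merged into one kernel-verified Lean document; each statement's English description precedes it below -/
import Mathlib

section
/- Let A be the Perrin sequence defined by A(1)=0, A(2)=2, A(3)=3, and A(n)=A(n-2)+A(n-3) for n>3. Then for every prime p, p divides A(p). -/
open Matrix

theorem perrin_divisibility (A : ℕ → ℕ)
    (h1 : A 1 = 0) (h2 : A 2 = 2) (h3 : A 3 = 3)
    (hrec : ∀ n, 3 < n → A n = A (n - 2) + A (n - 3)) :
    ∀ p : ℕ, p.Prime → p ∣ A p := by
  intro p hp
  haveI : Fact p.Prime := ⟨hp⟩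
  set M : Matrix (Fin 3) (Fin 3) (ZMod p) := !![0,1,0; 0,0,1; 1,1,0] with hM
  have hM3 : M ^ 3 = M + 1 := by
    ext i j
    fin_cases i <;> fin_cases j <;>
      simp [hM, pow_succ, Matrix.mul_apply, Fin.sum_univ_three, Matrix.one_fin_three,
        Matrix.vecHead, Matrix.vecTail]
  have htr1 : Matrix.trace M = 0 := by
    simp [hM, Matrix.trace_fin_three]
  have htr2 : Matrix.trace (M ^ 2) = 2 := by
    have : M ^ 2 = !![0,0,1; 1,1,0; 0,1,1] := by
      ext i j
      fin_cases i <;> fin_cases j <;>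
        simp [hM, pow_succ, Matrix.mul_apply, Fin.sum_univ_three, Matrix.vecHead, Matrix.vecTail]
    rw [this]; rw [Matrix.trace_fin_three]; simp; norm_num
  have htr3 : Matrix.trace (M ^ 3) = 3 := by
    rw [hM3, Matrix.trace_add, htr1, Matrix.trace_one]
    norm_num
  have key : ∀ n, 1 ≤ n → (A n : ZMod p) = Matrix.trace (M ^ n) := by
    intro n
    induction n using Nat.strong_induction_on with
    | _ n ih =>
      intro hn
      match n, hn with
      | 1, _ => simpa [h1, pow_one] using htr1.symm
      | 2, _ => rw [h2, htr2]; norm_num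
      | 3, _ => rw [h3, htr3]; norm_num
      | (m+4), _ =>
        have h4 : 3 < m + 4 := by omega
        rw [hrec _ h4]
        have e2 : m + 4 - 2 = m + 2 := by omega
        have e3 : m + 4 - 3 = m + 1 := by omega
        rw [e2, e3]
        have i2 := ih (m+2) (by omega) (by omega)
        have i3 := ih (m+1) (by omega) (by omega)
        push_cast
        rw [i2, i3]
        have : M ^ (m + 4) = M ^ (m + 2) + M ^ (m + 1) := by
          have : M ^ (m + 4) = M ^ (m + 1) * M ^ 3 := by
            rw [← pow_add]
          rw [this, hM3, mul_add, mul_one, ← pow_succ]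
        rw [this, Matrix.trace_add]
  have hAp := key p hp.one_lt.le
  have : (A p : ZMod p) = 0 := by
    rw [hAp, ZMod.trace_pow_card, htr1, zero_pow hp.ne_zero]
  exact (ZMod.natCast_eq_zero_iff _ _).mp this
end

section
/- Let a(n) be the companion Pell sequence and b(n) = a(n) − 2. If 6 divides n and n divides b(n), then 3n divides b(3n). -/
theorem companion_pell_pseudo_triple (a : ℕ → ℤ)
    (h0 : a 0 = 2) (h1 : a 1 = 2)
    (hrec : ∀ n, 2 ≤ n → a n = a (n - 1) + 2 * a (n - 2))
    (b : ℕ → ℤ) (hb : ∀ n, b n = a n - 2) :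
    ∀ n : ℕ, 6 ∣ n → (n : ℤ) ∣ b n → (3 * n : ℤ) ∣ b (3 * n) := by
  have key : ∀ n, 3 * a n = 2 ^ (n + 2) + 2 * (-1) ^ n := by
    intro n
    induction n using Nat.strong_induction_on with
    | _ n ih =>
      match n with
      | 0 => rw [h0]; norm_num
      | 1 => rw [h1]; norm_num
      | (m + 2) =>
        rw [hrec (m + 2) (by omega)]
        have e1 : m + 2 - 1 = m + 1 := by omega
        have e2 : m + 2 - 2 = m := by omega
        rw [e1, e2]
        have i1 := ih (m + 1) (by omega)
        have i2 := ih m (by omega)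
        linear_combination i1 + 2 * i2
  have hbe : ∀ m, Even m → 3 * b m = 4 * (2 ^ m - 1) := by
    intro m hm
    rw [hb]
    have h := key m
    rw [hm.neg_one_pow] at h
    have h2 : (2 : ℤ) ^ (m + 2) = 4 * 2 ^ m := by ring
    rw [h2] at h
    linarith
  intro n h6 hdiv
  have hev : Even n := by
    obtain ⟨k, hk⟩ := h6
    exact ⟨3 * k, by omega⟩
  have hev3 : Even (3 * n) := hev.mul_left 3
  have hB := hbe n hev
  have hB3 := hbe (3 * n) hev3
  have hx3 : (2 : ℤ) ^ (3 * n) = ((2 : ℤ) ^ n) ^ 3 := by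
    rw [mul_comm, pow_mul]
  rw [hx3] at hB3
  -- 3 ∣ 2^n - 1 since n is even
  have h3d : (3 : ℤ) ∣ 2 ^ n - 1 := by
    obtain ⟨k, hk⟩ := hev
    have h4 : (4 : ℤ) ≡ 1 [ZMOD 3] := by decide
    have := h4.pow k
    have h2n : (2 : ℤ) ^ n = 4 ^ k := by
      rw [hk, ← two_mul, pow_mul]; norm_num
    rw [h2n]
    have h1k := Int.ModEq.dvd this
    simp only [one_pow] at h1k
    exact (dvd_sub_comm).mp h1k
  obtain ⟨m, hm⟩ := h3d
  have hx : (2 : ℤ) ^ n = 3 * m + 1 := by linarith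
  set C : ℤ := ((2 : ℤ) ^ n) ^ 2 + 2 ^ n + 1 with hCdef
  have heq : b (3 * n) = b n * C := by
    apply mul_left_cancel₀ (by norm_num : (3 : ℤ) ≠ 0)
    linear_combination hB3 - C * hB
  have hC : C = 3 * (3 * m ^ 2 + 3 * m + 1) := by
    linear_combination (2 ^ n + 3 * m + 2) * hx
  obtain ⟨t, ht⟩ := hdiv
  rw [heq, ht, hC]
  exact ⟨t * (3 * m ^ 2 + 3 * m + 1), by ring⟩
end

section
/- Let a(n) satisfy a(0)=2, a(1)=2, a(n)=2a(n-1)+2a(n-2) for n ≥ 2 (generating function (2−2x)/(1−2x−2x²)). Then for every prime p, a(p) ≡ 2 (mod p). -/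
theorem thm3_prime (a : ℕ → ℤ)
    (h0 : a 0 = 2) (h1 : a 1 = 2)
    (hrec : ∀ n, 2 ≤ n → a n = 2 * a (n - 1) + 2 * a (n - 2)) :
    ∀ p : ℕ, p.Prime → a p ≡ 2 [ZMOD (p : ℤ)] := by
  intro p hp
  haveI : Fact p.Prime := ⟨hp⟩
  rw [← ZMod.intCast_eq_intCast_iff]
  have key : ∀ n : ℕ, ((a n : ZMod p)) = Matrix.trace ((!![2,2;1,0] : Matrix (Fin 2) (Fin 2) (ZMod p)) ^ n) := by
    set M : Matrix (Fin 2) (Fin 2) (ZMod p) := !![2,2;1,0] with hM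
    have hM2 : M ^ 2 = (2 : ZMod p) • M + (2 : ZMod p) • (1 : Matrix (Fin 2) (Fin 2) (ZMod p)) := by
      rw [pow_two, hM]
      ext i j
      fin_cases i <;> fin_cases j <;>
        simp [Matrix.mul_apply, Fin.sum_univ_succ, Matrix.one_apply, Matrix.smul_apply, Matrix.add_apply] <;> ring
    have step : ∀ n : ℕ, ((a n : ZMod p)) = Matrix.trace (M ^ n) ∧
        ((a (n+1) : ZMod p)) = Matrix.trace (M ^ (n+1)) := by
      intro n
      induction n with
      | zero =>
        constructor
        · simp [h0, hM, Matrix.trace_fin_two]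
        · simp [h1, hM, Matrix.trace_fin_two]
      | succ k ih =>
        refine ⟨ih.2, ?_⟩
        have hr := hrec (k + 2) (by omega)
        simp only [Nat.add_sub_cancel] at hr
        have : k + 2 - 1 = k + 1 := by omega
        rw [this] at hr
        have hpow : M ^ (k + 2) = (2 : ZMod p) • M ^ (k+1) + (2 : ZMod p) • M ^ k := by
          have : M ^ (k + 2) = M ^ k * M ^ 2 := by rw [pow_add]
          rw [this, hM2]
          rw [mul_add, mul_smul_comm, mul_smul_comm, mul_one, ← pow_succ]
        rw [hr, hpow]
        push_cast
        rw [Matrix.trace_add, Matrix.trace_smul, Matrix.trace_smul]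
        rw [ih.1, ih.2]
        push_cast
        simp only [smul_eq_mul]
    intro n; exact (step n).1
  have := key p
  rw [ZMod.trace_pow_card] at this
  have htr : Matrix.trace (!![2,2;1,0] : Matrix (Fin 2) (Fin 2) (ZMod p)) = 2 := by
    simp [Matrix.trace_fin_two]
  rw [htr, ZMod.pow_card] at this
  calc (a p : ZMod p) = 2 := this
    _ = ((2 : ℤ) : ZMod p) := by push_cast; ring
end

section
/- Let a(n) satisfy a(0)=2, a(1)=2, a(n)=2a(n-1)+2a(n-2). Then for every i ≥ 2, a(3^i) ≡ 2 (mod 3^i), so all powers 3^i with i ≥ 2 are pseudoprimes for this test. -/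
private lemma cube_re3 (z : ℤ√3) : (z^3).re = z.re^3 + 9*z.re*z.im^2 := by
  simp [pow_succ, Zsqrtd.re_mul, Zsqrtd.im_mul]; ring

private lemma cube_im3 (z : ℤ√3) : (z^3).im = 3*z.im*(z.re^2 + z.im^2) := by
  simp [pow_succ, Zsqrtd.re_mul, Zsqrtd.im_mul]; ring

theorem thm3_pseudoprimes_pow3 (a : ℕ → ℤ)
    (h0 : a 0 = 2) (h1 : a 1 = 2)
    (hrec : ∀ n, 2 ≤ n → a n = 2 * a (n - 1) + 2 * a (n - 2)) :
    ∀ i : ℕ, 2 ≤ i → a (3 ^ i) ≡ 2 [ZMOD ((3 ^ i : ℕ) : ℤ)] := by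
  set α : ℤ√3 := ⟨1, 1⟩ with hα
  have hsq : α * α = α + α + 1 + 1 := by
    ext <;> simp [hα, Zsqrtd.re_mul, Zsqrtd.im_mul]
  have key : ∀ n, a n = 2 * (α ^ n).re := by
    intro n
    induction n using Nat.twoStepInduction with
    | zero => simp [h0, hα]
    | one => simp [h1, hα]
    | more n ih1 ih2 =>
      have h2 : a (n + 2) = 2 * a (n + 1) + 2 * a n := by
        have := hrec (n + 2) (by omega)
        simpa using this
      have hrec2 : α ^ (n + 2) = α ^ (n+1) + α ^ (n+1) + α ^ n + α ^ n := by
        have : α ^ (n + 2) = α ^ n * (α * α) := by ring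
        rw [this, hsq]; ring
      rw [h2, ih1, ih2, hrec2]
      simp [Zsqrtd.re_add]
      ring
  have main : ∀ j : ℕ, (3:ℤ)^(j+1) ∣ (α ^ 3 ^ (j+1)).re - 1 ∧
      (3:ℤ)^(j+1) ∣ (α ^ 3 ^ (j+1)).im := by
    intro j
    induction j with
    | zero =>
      have h3 : α ^ 3 ^ 1 = ⟨10, 6⟩ := by
        ext <;> simp [hα, pow_succ, Zsqrtd.re_mul, Zsqrtd.im_mul]
      rw [h3]
      constructor
      · exact ⟨3, by norm_num⟩
      · exact ⟨2, by norm_num⟩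
    | succ j ih =>
      obtain ⟨⟨s, hs⟩, ⟨t, ht⟩⟩ := ih
      have hx : (α ^ 3 ^ (j+1)).re = 1 + 3^(j+1) * s := by linarith
      have hcube : α ^ 3 ^ (j+1+1) = (α ^ 3 ^ (j+1)) ^ 3 := by
        rw [pow_succ, pow_mul]
      rw [hcube, cube_re3, cube_im3, hx, ht]
      constructor
      · exact ⟨s + 3*3^j*s^2 + 3*(3^j)^2*s^3 + 9*3^j*t^2 + 27*(3^j)^2*s*t^2, by ring⟩
      · exact ⟨t*((1+3*3^j*s)^2 + 9*(3^j)^2*t^2), by ring⟩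
  intro i hi
  obtain ⟨j, rfl⟩ : ∃ j, i = j + 1 := ⟨i - 1, by omega⟩
  obtain ⟨⟨s, hs⟩, -⟩ := main j
  have hcast : (((3 : ℕ) ^ (j+1) : ℕ) : ℤ) = (3:ℤ)^(j+1) := by push_cast; ring
  rw [hcast, Int.modEq_iff_dvd, key]
  exact ⟨-2*s, by linear_combination (-2) * hs⟩
end

section
/- Let a(n) satisfy a(0)=2, a(1)=2, a(n)=2a(n-1)+2a(n-2). Then for every i ≥ 1, a(2·3^i) ≡ 2 (mod 2·3^i). -/
private def pq : ℕ → ℤ × ℤ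
  | 0 => (1, 0)
  | n+1 => ((pq n).1 + 3 * (pq n).2, (pq n).1 + (pq n).2)

private lemma pq_add (m n : ℕ) :
    (pq (m + n)).1 = (pq m).1 * (pq n).1 + 3 * (pq m).2 * (pq n).2 ∧
    (pq (m + n)).2 = (pq m).1 * (pq n).2 + (pq m).2 * (pq n).1 := by
  induction n with
  | zero => simp [pq]
  | succ n ih =>
    rw [Nat.add_succ]
    simp only [pq]
    rw [ih.1, ih.2]
    constructor <;> ring

private lemma a_eq_pq (a : ℕ → ℤ)
    (h0 : a 0 = 2) (h1 : a 1 = 2)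
    (hrec : ∀ n, 2 ≤ n → a n = 2 * a (n - 1) + 2 * a (n - 2)) :
    ∀ n, a n = 2 * (pq n).1 := by
  have key : ∀ n, a n = 2 * (pq n).1 ∧ a (n+1) = 2 * (pq (n+1)).1 := by
    intro n
    induction n with
    | zero => simp [pq, h0, h1]
    | succ n ih =>
      refine ⟨ih.2, ?_⟩
      have h := hrec (n+2) (by omega)
      simp only [show n+2-1 = n+1 from rfl, show n+2-2 = n from rfl] at h
      rw [h, ih.1, ih.2]
      simp only [pq]
      ring
  exact fun n => (key n).1

private lemma pq_triple (m : ℕ) :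
    (pq (3 * m)).1 = (pq m).1 ^ 3 + 9 * (pq m).1 * (pq m).2 ^ 2 ∧
    (pq (3 * m)).2 = 3 * (pq m).1 ^ 2 * (pq m).2 + 3 * (pq m).2 ^ 3 := by
  have h2 := pq_add m m
  have h3 := pq_add m (m + m)
  rw [show 3 * m = m + (m + m) by ring]
  rw [h3.1, h3.2, h2.1, h2.2]
  constructor <;> ring

private lemma pq_key : ∀ i : ℕ, 1 ≤ i →
    ((3:ℤ) ^ i ∣ (pq (3 ^ i)).1 - 1) ∧ ((3:ℤ) ^ i ∣ (pq (3 ^ i)).2) := by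
  intro i hi
  induction i with
  | zero => omega
  | succ i ih =>
    rcases Nat.eq_or_lt_of_le hi with h | h
    · -- i + 1 = 1
      have : i = 0 := by omega
      subst this
      norm_num [pq]
    · have hi1 : 1 ≤ i := by omega
      obtain ⟨⟨t, ht⟩, ⟨s, hs⟩⟩ := ih hi1
      obtain ⟨j, rfl⟩ : ∃ j, i = j + 1 := ⟨i - 1, by omega⟩
      have hp : (pq (3 ^ (j+1))).1 = 3 ^ (j+1) * t + 1 := by linarith [ht]
      have htr := pq_triple (3 ^ (j+1))
      rw [show 3 * 3 ^ (j+1) = 3 ^ (j+1+1) by ring] at htr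
      constructor
      · refine ⟨t + 3^(j+1)*t^2 + 3^(2*j+1)*t^3 + 3^(j+2)*s^2 + 3^(2*j+3)*t*s^2, ?_⟩
        rw [htr.1, hp, hs]
        ring
      · refine ⟨s * (3^(j+1)*t + 1)^2 + 3^(2*j+2) * s^3, ?_⟩
        rw [htr.2, hp, hs]
        ring

theorem thm3_pseudoprimes_two_pow3 (a : ℕ → ℤ)
    (h0 : a 0 = 2) (h1 : a 1 = 2)
    (hrec : ∀ n, 2 ≤ n → a n = 2 * a (n - 1) + 2 * a (n - 2)) :
    ∀ i : ℕ, 1 ≤ i → a (2 * 3 ^ i) ≡ 2 [ZMOD ((2 * 3 ^ i : ℕ) : ℤ)] := by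
  intro i hi
  obtain ⟨⟨t, ht⟩, ⟨s, hs⟩⟩ := pq_key i hi
  have hp : (pq (3 ^ i)).1 = 3 ^ i * t + 1 := by linarith [ht]
  have hadd := pq_add (3 ^ i) (3 ^ i)
  have ha := a_eq_pq a h0 h1 hrec (2 * 3 ^ i)
  rw [show 2 * 3 ^ i = 3 ^ i + 3 ^ i by ring] at ha ⊢
  rw [ha, hadd.1, hp, hs]
  have hcast : ((3 ^ i + 3 ^ i : ℕ) : ℤ) = 2 * 3 ^ i := by push_cast; ring
  rw [hcast]
  symm
  rw [Int.modEq_iff_dvd]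
  exact ⟨2 * t + 3 ^ i * t ^ 2 + 3 ^ (i + 1) * s ^ 2, by ring⟩
end

section
/- Let a(n) satisfy a(0)=3, a(1)=0, a(2)=−4, a(n)=−2a(n-2)−2a(n-3) for n ≥ 3 (generating function (2x²+3)/(1+2x²+2x³)). Then for every prime p, p divides a(p). -/
open Matrix

def Mc : Matrix (Fin 3) (Fin 3) ℤ := !![0,1,0; 0,0,1; -2,-2,0]

lemma Mc_cube : Mc ^ 3 = (-2 : ℤ) • Mc - (2 : ℤ) • 1 := by
  rw [pow_succ, pow_two]
  ext i j
  fin_cases i <;> fin_cases j <;>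
    simp [Mc, Matrix.mul_fin_three, Matrix.one_fin_three, Matrix.vecHead, Matrix.vecTail]

theorem thm4_prime (a : ℕ → ℤ)
    (h0 : a 0 = 3) (h1 : a 1 = 0) (h2 : a 2 = -4)
    (hrec : ∀ n, 3 ≤ n → a n = -2 * a (n - 2) - 2 * a (n - 3)) :
    ∀ p : ℕ, p.Prime → (p : ℤ) ∣ a p := by
  have key : ∀ n, a n = Matrix.trace (Mc ^ n) := by
    intro n
    induction n using Nat.strong_induction_on with
    | _ n ih =>
      match n with
      | 0 => simp [h0, Matrix.trace_one]
      | 1 => simp [h1, Mc, Matrix.trace_fin_three]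
      | 2 =>
        rw [h2, pow_two]
        simp [Mc, Matrix.mul_fin_three, Matrix.trace_fin_three]
      | (m+3) =>
        have hr := hrec (m+3) (by omega)
        simp only [show m+3-2 = m+1 from rfl, show m+3-3 = m from rfl] at hr
        rw [hr, ih (m+1) (by omega), ih m (by omega)]
        have hpow : Mc ^ (m+3) = Mc ^ m * Mc ^ 3 := by rw [← pow_add]
        rw [hpow, Mc_cube, Matrix.mul_sub, Matrix.mul_smul, Matrix.mul_smul,
          Matrix.trace_sub, Matrix.trace_smul, Matrix.trace_smul, mul_one, ← pow_succ]
        simp only [smul_eq_mul]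
  intro p hp
  haveI : Fact p.Prime := ⟨hp⟩
  have hcast : ((a p : ℤ) : ZMod p) = 0 := by
    rw [key p]
    have hmap : ((Matrix.trace (Mc ^ p) : ℤ) : ZMod p)
        = Matrix.trace (((Int.castRingHom (ZMod p)).mapMatrix Mc) ^ p) := by
      rw [← map_pow]
      simp [Matrix.trace, Matrix.diag, RingHom.mapMatrix_apply, Matrix.map_apply]
    rw [hmap, ZMod.trace_pow_card]
    have : Matrix.trace ((Int.castRingHom (ZMod p)).mapMatrix Mc) = 0 := by
      simp [Mc, Matrix.trace_fin_three, RingHom.mapMatrix_apply, Matrix.map_apply]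
    rw [this, zero_pow hp.ne_zero]
  exact (ZMod.intCast_zmod_eq_zero_iff_dvd _ _).mp hcast
end

section
/- Let a(n) satisfy a(0)=3, a(1)=0, a(2)=−4, a(n)=−2a(n-2)−2a(n-3) for n ≥ 3, and define b(n) = a(2n) − a(n)². Then b satisfies b(1)=−4, b(2)=−8, b(3)=−40, and b(n)=2b(n-1)+4b(n-3) for n > 3. -/
private def s : ℕ → ℤ
  | 0 => 3
  | 1 => 2
  | 2 => 4
  | n + 3 => 2 * s (n + 2) + 4 * s n

private lemma key (a : ℕ → ℤ)
    (h0 : a 0 = 3) (h1 : a 1 = 0) (h2 : a 2 = -4)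
    (hrec : ∀ n, 3 ≤ n → a n = -2 * a (n - 2) - 2 * a (n - 3)) :
    ∀ n : ℕ,
      a (2 * n) = a n ^ 2 - 2 * s n ∧
      2 * a (2 * n + 1) = 2 * a n * a (n + 1) - s (n + 2) + 2 * s (n + 1) ∧
      a (2 * n + 2) = a (n + 1) ^ 2 - 2 * s (n + 1) ∧
      a n * a (n + 2) = a (n + 1) ^ 2 - 3 * s (n + 1) - 2 * s n ∧
      2 * a (2 * n + 1) + 2 * a (2 * n) + a (n + 1) * a (n + 2) = 2 * s n ∧
      2 * a (2 * n + 2) + 2 * a (2 * n + 1) + a (n + 2) ^ 2 = 2 * s (n + 2) := by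
  intro n
  induction n with
  | zero =>
      have hs0 : s 0 = 3 := rfl
      have hs1 : s 1 = 2 := rfl
      have hs2 : s 2 = 4 := rfl
      norm_num [h0, h1, h2, hs0, hs1, hs2]
  | succ n IH =>
      obtain ⟨IH1, IH2, IH3, IH4, IH5, IH6⟩ := IH
      have h3 : a (n + 3) = -2 * a (n + 1) - 2 * a n := by
        have h := hrec (n + 3) (by omega)
        rwa [show n + 3 - 2 = n + 1 from by omega, show n + 3 - 3 = n from by omega] at h
      have hA3 : a (2 * n + 3) = -2 * a (2 * n + 1) - 2 * a (2 * n) := by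
        have h := hrec (2 * n + 3) (by omega)
        rwa [show 2 * n + 3 - 2 = 2 * n + 1 from by omega,
          show 2 * n + 3 - 3 = 2 * n from by omega] at h
      have hA4 : a (2 * n + 4) = -2 * a (2 * n + 2) - 2 * a (2 * n + 1) := by
        have h := hrec (2 * n + 4) (by omega)
        rwa [show 2 * n + 4 - 2 = 2 * n + 2 from by omega,
          show 2 * n + 4 - 3 = 2 * n + 1 from by omega] at h
      have hs3 : s (n + 3) = 2 * s (n + 2) + 4 * s n := rfl
      refine ⟨?_, ?_, ?_, ?_, ?_, ?_⟩
      · show a (2 * n + 2) = a (n + 1) ^ 2 - 2 * s (n + 1)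
        exact IH3
      · show 2 * a (2 * n + 3) = 2 * a (n + 1) * a (n + 2) - s (n + 3) + 2 * s (n + 2)
        rw [hA3, hs3]
        linear_combination (-2 : ℤ) * IH5
      · show a (2 * n + 4) = a (n + 2) ^ 2 - 2 * s (n + 2)
        rw [hA4]
        linear_combination (-1 : ℤ) * IH6
      · show a (n + 1) * a (n + 3) = a (n + 2) ^ 2 - 3 * s (n + 2) - 2 * s (n + 1)
        rw [h3]
        linear_combination IH2 + 2 * IH3 - IH6
      · show 2 * a (2 * n + 3) + 2 * a (2 * n + 2) + a (n + 2) * a (n + 3) = 2 * s (n + 1)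
        rw [hA3, h3]
        linear_combination 2 * IH3 - 2 * IH4 - 2 * IH5
      · show 2 * a (2 * n + 4) + 2 * a (2 * n + 3) + a (n + 3) ^ 2 = 2 * s (n + 3)
        rw [hA4, hA3, h3, hs3]
        linear_combination (-4 : ℤ) * IH1 - 4 * IH2 - 4 * IH3

theorem thm4_b_recurrence (a : ℕ → ℤ)
    (h0 : a 0 = 3) (h1 : a 1 = 0) (h2 : a 2 = -4)
    (hrec : ∀ n, 3 ≤ n → a n = -2 * a (n - 2) - 2 * a (n - 3))
    (b : ℕ → ℤ) (hb : ∀ n, b n = a (2 * n) - (a n) ^ 2) :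
    b 1 = -4 ∧ b 2 = -8 ∧ b 3 = -40 ∧
      ∀ n, 3 < n → b n = 2 * b (n - 1) + 4 * b (n - 3) := by
  have hb' : ∀ k, b k = -2 * s k := by
    intro k
    rw [hb k, (key a h0 h1 h2 hrec k).1]
    ring
  have hs1 : s 1 = 2 := rfl
  have hs2 : s 2 = 4 := rfl
  have hs3 : s 3 = (20 : ℤ) := by norm_num [s]
  refine ⟨by rw [hb' 1, hs1]; ring, by rw [hb' 2, hs2]; ring, by rw [hb' 3, hs3]; ring, ?_⟩
  intro n hn
  obtain ⟨m, rfl⟩ : ∃ m, n = m + 4 := ⟨n - 4, by omega⟩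
  rw [show m + 4 - 1 = m + 3 from by omega, show m + 4 - 3 = m + 1 from by omega,
    hb', hb', hb', show s (m + 4) = 2 * s (m + 3) + 4 * s (m + 1) from rfl]
  ring
end

section
/- Let a(n) satisfy a(0)=3, a(1)=1, a(2)=5, a(n)=a(n-1)+2a(n-2)+a(n-3) for n ≥ 3 (generating function (3−2x−2x²)/(1−x−2x²−x³)). Then for every prime p, a(p) ≡ 1 (mod p). -/
open Matrix

/-- Companion matrix of x³ - x² - 2x - 1. -/
def Mcomp : Matrix (Fin 3) (Fin 3) ℤ := !![0,0,1; 1,0,2; 0,1,1]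

lemma Mcomp_cayley : Mcomp ^ 3 = Mcomp ^ 2 + (2:ℤ) • Mcomp + 1 := by
  show Mcomp ^ 3 = Mcomp ^ 2 + 2 • Mcomp + (1 : Matrix (Fin 3) (Fin 3) ℤ)
  ext i j
  fin_cases i <;> fin_cases j <;>
    simp [Mcomp, pow_succ, pow_zero, Matrix.mul_apply, Fin.sum_univ_three,
      Matrix.one_apply, Matrix.add_apply, Matrix.smul_apply]

lemma trace_rec (n : ℕ) :
    trace (Mcomp ^ (n + 3)) =
      trace (Mcomp ^ (n + 2)) + 2 * trace (Mcomp ^ (n + 1)) + trace (Mcomp ^ n) := by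
  have h : Mcomp ^ (n + 3) = Mcomp ^ n * (Mcomp ^ 2 + (2:ℤ) • Mcomp + 1) := by
    rw [← Mcomp_cayley, ← pow_add]
  rw [h, mul_add, mul_add, mul_one, mul_smul_comm, trace_add, trace_add, trace_smul,
    ← pow_add, ← pow_succ, smul_eq_mul]

lemma a_eq_trace (a : ℕ → ℤ)
    (h0 : a 0 = 3) (h1 : a 1 = 1) (h2 : a 2 = 5)
    (hrec : ∀ n, 3 ≤ n → a n = a (n - 1) + 2 * a (n - 2) + a (n - 3)) :
    ∀ n, a n = trace (Mcomp ^ n) := by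
  have key : ∀ n, a n = trace (Mcomp ^ n) ∧ a (n+1) = trace (Mcomp ^ (n+1)) ∧
      a (n+2) = trace (Mcomp ^ (n+2)) := by
    intro n
    induction n with
    | zero =>
      refine ⟨?_, ?_, ?_⟩ <;>
        simp [h0, h1, h2, Mcomp, pow_succ, Matrix.trace_fin_three, Matrix.mul_apply,
          Fin.sum_univ_three, Matrix.vecHead, Matrix.vecTail, Matrix.one_apply]
    | succ k ih =>
      refine ⟨ih.2.1, ih.2.2, ?_⟩
      have h3 : a (k + 3) = a (k + 2) + 2 * a (k + 1) + a k := by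
        have := hrec (k + 3) (by omega)
        simpa using this
      rw [show k + 1 + 2 = k + 3 by ring, h3, trace_rec, ih.1, ih.2.1, ih.2.2]
  exact fun n => (key n).1

theorem thm5_prime (a : ℕ → ℤ)
    (h0 : a 0 = 3) (h1 : a 1 = 1) (h2 : a 2 = 5)
    (hrec : ∀ n, 3 ≤ n → a n = a (n - 1) + 2 * a (n - 2) + a (n - 3)) :
    ∀ p : ℕ, p.Prime → a p ≡ 1 [ZMOD (p : ℤ)] := by
  intro p hp
  haveI : Fact p.Prime := ⟨hp⟩
  rw [a_eq_trace a h0 h1 h2 hrec]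
  have hcast : ((trace (Mcomp ^ p) : ℤ) : ZMod p) = ((1 : ℤ) : ZMod p) := by
    have hmap : (Mcomp.map (Int.cast : ℤ → ZMod p)) ^ p =
        (Mcomp ^ p).map (Int.cast : ℤ → ZMod p) := by
      simpa using (map_pow ((Int.castRingHom (ZMod p)).mapMatrix) Mcomp p).symm
    have htr : ((trace (Mcomp ^ p) : ℤ) : ZMod p) =
        trace ((Mcomp ^ p).map (Int.cast : ℤ → ZMod p)) := by
      simp [Matrix.trace, Matrix.map_apply, Matrix.diag]
    rw [htr, ← hmap, ZMod.trace_pow_card]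
    have h1tr : trace (Mcomp.map (Int.cast : ℤ → ZMod p)) = 1 := by
      simp [Mcomp, Matrix.trace_fin_three, Matrix.map_apply]
    rw [h1tr, one_pow]
    simp
  have := (ZMod.intCast_eq_intCast_iff _ _ _).mp hcast
  exact this
end

section
/- Let a(n) satisfy a(0)=3, a(1)=1, a(2)=5, a(n)=a(n-1)+2a(n-2)+a(n-3) for n ≥ 3. Then for every i ≥ 2, a(3^i) ≡ 1 (mod 3^i), so all powers 3^i with i ≥ 2 are pseudoprimes for this test. -/
open Matrix

private abbrev M3' := Matrix (Fin 3) (Fin 3) ℤ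

private def Mm : M3' := !![1,2,1;1,0,0;0,1,0]
private def Nm : M3' := !![0,1,0;0,0,1;1,-1,-2]

private lemma MN : Mm * Nm = 1 := by
  ext i j
  fin_cases i <;> fin_cases j <;>
    simp [Mm, Nm, Matrix.mul_apply, Fin.sum_univ_three, Matrix.one_apply]

private lemma NM : Nm * Mm = 1 := by
  ext i j
  fin_cases i <;> fin_cases j <;>
    simp [Mm, Nm, Matrix.mul_apply, Fin.sum_univ_three, Matrix.one_apply] <;> rfl

private lemma detM : Mm.det = 1 := by
  simp [Mm, Matrix.det_fin_three, Matrix.vecHead, Matrix.vecTail]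
private lemma detN : Nm.det = 1 := by
  simp [Nm, Matrix.det_fin_three, Matrix.vecHead, Matrix.vecTail]

private lemma Mcube : Mm^3 = Mm^2 + Mm^1 + Mm^1 + Mm^0 := by
  simp only [pow_succ, pow_one, pow_zero, one_mul]
  ext i j
  fin_cases i <;> fin_cases j <;>
    simp [Mm, Matrix.mul_apply, Fin.sum_univ_three, Matrix.one_apply] <;> rfl

private lemma traceM3 : (Mm^3).trace = 10 := by
  simp only [pow_succ, pow_one, pow_zero, one_mul]
  simp [Mm, Matrix.mul_fin_three, Matrix.trace_fin_three, Matrix.vecHead, Matrix.vecTail]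

private lemma traceN3 : (Nm^3).trace = 1 := by
  simp only [pow_succ, pow_one, pow_zero, one_mul]
  simp [Nm, Matrix.mul_fin_three, Matrix.trace_fin_three, Matrix.vecHead, Matrix.vecTail]

private lemma trace_cube (A : M3') :
    (A*A*A).trace = A.trace^3 - 3*A.trace*(A.adjugate).trace + 3*A.det := by
  rw [Matrix.eta_fin_three A]
  simp [Matrix.trace_fin_three, Matrix.adjugate_fin_three, Matrix.mul_fin_three,
    Matrix.det_fin_three]
  ring

private lemma adj_of (A B : M3') (hd : A.det = 1) (h : A * B = 1) : A.adjugate = B := by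
  calc A.adjugate = A.adjugate * (A * B) := by rw [h, mul_one]
    _ = (A.adjugate * A) * B := by rw [mul_assoc]
    _ = B := by rw [Matrix.adjugate_mul, hd, one_smul, one_mul]

private lemma MNpow (k : ℕ) : Mm^k * Nm^k = 1 := by
  have hc : Commute Mm Nm := by
    show Mm * Nm = Nm * Mm
    rw [MN, NM]
  rw [← hc.mul_pow, MN, one_pow]

private lemma NMpow (k : ℕ) : Nm^k * Mm^k = 1 := by
  have hc : Commute Nm Mm := by
    show Nm * Mm = Mm * Nm
    rw [MN, NM]
  rw [← hc.mul_pow, NM, one_pow]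

private lemma keyM (k : ℕ) : (Mm^(3*k)).trace =
    (Mm^k).trace^3 - 3*(Mm^k).trace*(Nm^k).trace + 3 := by
  have h1 : Mm^(3*k) = (Mm^k) * (Mm^k) * (Mm^k) := by
    rw [mul_comm, pow_mul, pow_succ, pow_succ, pow_one]
  rw [h1, trace_cube, adj_of (Mm^k) (Nm^k) (by rw [det_pow, detM, one_pow]) (MNpow k),
    det_pow, detM, one_pow, mul_one]

private lemma keyN (k : ℕ) : (Nm^(3*k)).trace =
    (Nm^k).trace^3 - 3*(Nm^k).trace*(Mm^k).trace + 3 := by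
  have h1 : Nm^(3*k) = (Nm^k) * (Nm^k) * (Nm^k) := by
    rw [mul_comm, pow_mul, pow_succ, pow_succ, pow_one]
  rw [h1, trace_cube, adj_of (Nm^k) (Mm^k) (by rw [det_pow, detN, one_pow]) (NMpow k),
    det_pow, detN, one_pow, mul_one]

private lemma main_ind : ∀ i : ℕ, 1 ≤ i →
    ((3:ℤ)^(i+1) ∣ (Mm^(3^i)).trace - 1 ∧ (3:ℤ)^(i+1) ∣ (Nm^(3^i)).trace - 1) := by
  intro i hi
  induction i, hi using Nat.le_induction with
  | base =>
    constructor
    · rw [pow_one, traceM3]; decide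
    · rw [pow_one, traceN3]; decide
  | succ i hi ih =>
    obtain ⟨⟨s, hs⟩, ⟨t, ht⟩⟩ := ih
    set A := (Mm^(3^i)).trace with hA
    set B := (Nm^(3^i)).trace with hB
    have hA' : A = 1 + 3^(i+1) * s := by linarith [hs]
    have hB' : B = 1 + 3^(i+1) * t := by linarith [ht]
    have hexp : (3:ℕ)^(i+1) = 3 * 3^i := by ring
    have hkM : (Mm^(3^(i+1))).trace = A^3 - 3*A*B + 3 := by
      rw [hexp, keyM]
    have hkN : (Nm^(3^(i+1))).trace = B^3 - 3*B*A + 3 := by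
      rw [hexp, keyN]
    set m : ℤ := 3^i with hm
    have h31 : (3:ℤ)^(i+1) = 3*m := by rw [hm, pow_succ]; ring
    have h32 : (3:ℤ)^(i+1+1) = 9*m := by rw [hm, pow_succ, pow_succ]; ring
    rw [hkM, hkN, h32, hA', hB', h31]
    constructor
    · exact ⟨-t + 3*m*s^2 - 3*m*s*t + 3*m^2*s^3, by ring⟩
    · exact ⟨-s + 3*m*t^2 - 3*m*t*s + 3*m^2*t^3, by ring⟩

theorem thm5_pseudoprimes (a : ℕ → ℤ)
    (h0 : a 0 = 3) (h1 : a 1 = 1) (h2 : a 2 = 5)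
    (hrec : ∀ n, 3 ≤ n → a n = a (n - 1) + 2 * a (n - 2) + a (n - 3)) :
    ∀ i : ℕ, 2 ≤ i → a (3 ^ i) ≡ 1 [ZMOD ((3 ^ i : ℕ) : ℤ)] := by
  have ha : ∀ n, a n = (Mm^n).trace := by
    intro n
    induction n using Nat.strong_induction_on with
    | _ n ih =>
      match n with
      | 0 => rw [h0, pow_zero, Matrix.trace_one]; rfl
      | 1 => rw [h1, pow_one]; simp [Mm, Matrix.trace_fin_three, Matrix.vecHead, Matrix.vecTail]
      | 2 =>
        rw [h2, pow_two]
        simp [Mm, Matrix.mul_fin_three, Matrix.trace_fin_three, Matrix.vecHead, Matrix.vecTail]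
      | (m+3) =>
        rw [hrec (m+3) (by omega)]
        have e1 : m + 3 - 1 = m + 2 := rfl
        have e2 : m + 3 - 2 = m + 1 := rfl
        have e3 : m + 3 - 3 = m := rfl
        rw [e1, e2, e3, ih (m+2) (by omega), ih (m+1) (by omega), ih m (by omega)]
        have hp : Mm^(m+3) = Mm^(m+2) + Mm^(m+1) + Mm^(m+1) + Mm^(m+0) := by
          calc Mm^(m+3) = Mm^m * Mm^3 := by rw [← pow_add]
            _ = Mm^m * Mm^2 + Mm^m * Mm^1 + Mm^m * Mm^1 + Mm^m * Mm^0 := by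
                rw [Mcube, mul_add, mul_add, mul_add]
            _ = Mm^(m+2) + Mm^(m+1) + Mm^(m+1) + Mm^(m+0) := by
                rw [← pow_add, ← pow_add, ← pow_add]
        rw [hp, Matrix.trace_add, Matrix.trace_add, Matrix.trace_add]
        rw [show m + 0 = m from rfl]
        ring
  intro i hi
  have hdvd : (3:ℤ)^(i+1) ∣ (Mm^(3^i)).trace - 1 := (main_ind i (by omega)).1
  have hdvd2 : (3:ℤ)^i ∣ a (3^i) - 1 := by
    rw [ha]
    exact dvd_trans (pow_dvd_pow 3 (Nat.le_succ i)) hdvd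
  have hcast : ((3 ^ i : ℕ) : ℤ) = (3:ℤ)^i := by push_cast; ring
  rw [hcast, Int.modEq_iff_dvd]
  obtain ⟨k, hk⟩ := hdvd2
  exact ⟨-k, by linarith⟩
end
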